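/- Let T be a unitary matrix over ℂ and σ ∈ ℂ a scalar such that T · T* = σ·I, where T* denotes the entrywise complex conjugate of T. Then σ = 1 or σ = −1. -/
import Mathlib


/-- If `T` is unitary and `T · T* = σ·I` (with `T*` the entrywise complex conjugate),
then `σ = 1` or `σ = −1`. -/
theorem time_reversal_index_is_sign {n : ℕ} (hn : 0 < n)
    (T : Matrix (Fin n) (Fin n) ℂ) (σ : ℂ)
    (hT : T ∈ Matrix.unitaryGroup (Fin n) ℂ)
    (h : T * T.map (starRingEnd ℂ) = σ • (1 : Matrix (Fin n) (Fin n) ℂ)) :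
    σ = 1 ∨ σ = -1 := by
  haveI : NeZero n := ⟨hn.ne'⟩
  have hTT : T * star T = 1 := (Matrix.mem_unitaryGroup_iff).mp hT
  -- conjugate entrywise: T̄ * Tᵀ = 1
  have hst : star T = T.transpose.map (starRingEnd ℂ) := rfl
  have hconj : T.map (starRingEnd ℂ) * T.transpose = 1 := by
    have := congrArg (Matrix.map · (starRingEnd ℂ)) hTT
    have hcc : (⇑(starRingEnd ℂ) ∘ ⇑(starRingEnd ℂ)) = id := funext fun z => Complex.conj_conj z
    simpa [Matrix.map_mul, hst, Matrix.map_map, hcc, Matrix.map_id,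
      Matrix.map_one (starRingEnd ℂ) (map_zero _) (map_one _)] using this
  have h1 : T = σ • T.transpose := by
    calc T = T * (T.map (starRingEnd ℂ) * T.transpose) := by rw [hconj, mul_one]
    _ = (T * T.map (starRingEnd ℂ)) * T.transpose := by rw [mul_assoc]
    _ = σ • T.transpose := by rw [h, smul_mul_assoc, one_mul]
  have h2 : T.transpose = σ • T := by
    have := congrArg Matrix.transpose h1
    simpa using this
  have h3 : T = (σ * σ) • T := by
    rw [h2, smul_smul] at h1
    exact h1
  have hTne : T ≠ 0 := by
    intro h0
    rw [h0, zero_mul] at hTT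
    exact zero_ne_one hTT
  have h4 : σ * σ = 1 := by
    have : (σ * σ - 1) • T = 0 := by
      rw [sub_smul, one_smul, ← h3, sub_self]
    rcases smul_eq_zero.mp this with hs | hs
    · exact sub_eq_zero.mp hs
    · exact absurd hs hTne
  exact mul_self_eq_one_iff.mp h4
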